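/- For every even integer n ≥ 4, the wheel graph W_{1,n} satisfies ζ(W_{1,n}) = n(n − 4)/4. -/

import Mathlib

open SimpleGraph

/-- A proper vertex colouring of `G` using exactly `χ(G)` colours. -/
def IsChromaticColoring {V : Type*} (G : SimpleGraph V) (c : V → ℕ) : Prop :=
  (∀ u v, G.Adj u v → c u ≠ c v) ∧ ((Set.range c).ncard : ℕ∞) = G.chromaticNumber

/-- The set of chromatic completion edges for a colouring `c`: unordered pairs of
distinct non-adjacent vertices with different colours. -/
def completionEdges {V : Type*} (G : SimpleGraph V) (c : V → ℕ) : Set (Sym2 V) :=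
  {e | ∃ u v, e = s(u, v) ∧ u ≠ v ∧ ¬ G.Adj u v ∧ c u ≠ c v}

/-- The chromatic completion number `ζ(G)`. -/
noncomputable def zeta {V : Type*} (G : SimpleGraph V) : ℕ :=
  sSup {m | ∃ c : V → ℕ, IsChromaticColoring G c ∧ m = (completionEdges G c).ncard}
/-- The wheel graph `W_{1,n}`: the cycle `C_n` (on the `some` vertices) joined to a
central hub vertex `none` adjacent to every rim vertex. -/
def wheelGraph (n : ℕ) : SimpleGraph (Option (Fin n)) where
  Adj u v := match u, v with
    | none, none => False
    | none, some _ => True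
    | some _, none => True
    | some i, some j => (cycleGraph n).Adj i j
  symm := ⟨by
    intro u v h
    cases u <;> cases v <;> simp_all
    exact ((cycleGraph n).adj_symm h)⟩
  loopless := ⟨by
    intro u h
    cases u with
    | none => exact h
    | some i => exact (cycleGraph n).irrefl h⟩


/-! ### Auxiliary lemmas -/

section Aux
open Finset

lemma sub_val_one' {n : ℕ} {u v : Fin n} (h : (u - v).val = 1) :
    n - v.val + u.val = 1 ∨ n - v.val + u.val = n + 1 := by
  rw [Fin.sub_def] at h
  simp only at h
  have hu := u.isLt
  have hv := v.isLt
  rcases Nat.lt_or_ge (n - v.val + u.val) n with hlt | hge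
  · left; rwa [Nat.mod_eq_of_lt hlt] at h
  · right
    rw [Nat.mod_eq_sub_mod hge, Nat.mod_eq_of_lt (by omega)] at h
    omega

lemma adj_parity' {n : ℕ} (hev : 2 ∣ n) {u v : Fin n} (h : (cycleGraph n).Adj u v) :
    u.val % 2 ≠ v.val % 2 := by
  rw [cycleGraph_adj'] at h
  have hu := u.isLt
  have hv := v.isLt
  rcases h with h | h <;> rcases sub_val_one' h with h' | h' <;> omega

lemma adj_consec' {n : ℕ} (k : ℕ) (hk : k + 1 < n) :
    (cycleGraph n).Adj ⟨k, by omega⟩ ⟨k+1, by omega⟩ := by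
  rw [cycleGraph_adj']
  right
  rw [Fin.sub_def]
  simp only
  have : n - k + (k + 1) = n + 1 := by omega
  rw [this, Nat.add_mod_left]
  exact Nat.mod_eq_of_lt (by omega)

lemma parity_filter_card' (n : ℕ) (hev : 2 ∣ n) (r : ℕ) (hr : r < 2) :
    (Finset.univ.filter fun j : Fin n => j.val % 2 = r).card = n / 2 := by
  have h := Finset.card_bij'
    (s := Finset.univ.filter fun j : Fin n => j.val % 2 = r)
    (t := (Finset.univ : Finset (Fin (n/2))))
    (fun a _ => ⟨a.val / 2, by have := a.isLt; omega⟩)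
    (fun b _ => ⟨2 * b.val + r, by have := b.isLt; omega⟩)
    (fun a ha => Finset.mem_univ _)
    (fun b hb => by
      simp only [Finset.mem_filter, Finset.mem_univ, true_and]
      omega)
    (fun a ha => by
      simp only [Finset.mem_filter, Finset.mem_univ, true_and] at ha
      apply Fin.ext
      simp only
      omega)
    (fun b hb => by
      apply Fin.ext
      simp only
      omega)
  rw [h]
  simp

/-- auxiliary graph whose edges are exactly the completion edges -/
def compGraph (n : ℕ) : SimpleGraph (Option (Fin n)) where
  Adj u v := match u, v with
    | some i, some j => ¬(cycleGraph n).Adj i j ∧ i.val % 2 ≠ j.val % 2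
    | _, _ => False
  symm := ⟨by
    rintro (_|i) (_|j) h <;> try exact h.elim
    exact ⟨fun ha => h.1 ((cycleGraph n).adj_symm ha), fun he => h.2 he.symm⟩⟩
  loopless := ⟨by
    rintro (_|i) h
    · exact h
    · exact h.2 rfl⟩

instance compGraphDecidable (n : ℕ) : DecidableRel (compGraph n).Adj := by
  rintro (_|i) (_|j)
  · exact .isFalse id
  · exact .isFalse id
  · exact .isFalse id
  · exact instDecidableAnd

@[simp] lemma compGraph_adj_some {n : ℕ} {i j : Fin n} :
    (compGraph n).Adj (some i) (some j) ↔
      ¬(cycleGraph n).Adj i j ∧ i.val % 2 ≠ j.val % 2 := Iff.rfl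

@[simp] lemma compGraph_not_adj_none_left {n : ℕ} {v : Option (Fin n)} :
    ¬(compGraph n).Adj none v := by cases v <;> exact id

@[simp] lemma compGraph_not_adj_none_right {n : ℕ} {v : Option (Fin n)} :
    ¬(compGraph n).Adj v none := by cases v <;> exact id

lemma inner_count' (n : ℕ) (hn : 4 ≤ n) (hev : 2 ∣ n) (i : Fin n) :
    (Finset.univ.filter fun j : Fin n =>
      ¬(cycleGraph n).Adj i j ∧ i.val % 2 ≠ j.val % 2).card = n / 2 - 2 := by
  obtain ⟨m, rfl⟩ : ∃ m, n = m + 3 := ⟨n - 3, by omega⟩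
  have hset : (Finset.univ.filter fun j : Fin (m+3) =>
      ¬(cycleGraph (m+3)).Adj i j ∧ i.val % 2 ≠ j.val % 2)
      = (Finset.univ.filter fun j : Fin (m+3) => j.val % 2 = 1 - i.val % 2)
        \ (cycleGraph (m+3)).neighborFinset i := by
    ext j
    simp only [Finset.mem_filter, Finset.mem_univ, true_and, Finset.mem_sdiff,
      SimpleGraph.mem_neighborFinset]
    constructor
    · rintro ⟨h1, h2⟩; exact ⟨by omega, h1⟩
    · rintro ⟨h1, h2⟩; exact ⟨h2, by omega⟩
  have hsub : (cycleGraph (m+3)).neighborFinset i ⊆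
      Finset.univ.filter fun j : Fin (m+3) => j.val % 2 = 1 - i.val % 2 := by
    intro j hj
    rw [SimpleGraph.mem_neighborFinset] at hj
    have := adj_parity' hev hj
    simp only [Finset.mem_filter, Finset.mem_univ, true_and]
    omega
  rw [hset, Finset.card_sdiff_of_subset hsub, parity_filter_card' _ hev _ (by omega)]
  have hdeg : ((cycleGraph (m+3)).neighborFinset i).card = 2 :=
    cycleGraph_degree_three_le
  rw [hdeg]

lemma compGraph_card (n : ℕ) (hn : 4 ≤ n) (hev : 2 ∣ n) :
    (compGraph n).edgeFinset.card = n * (n - 4) / 4 := by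
  classical
  have key : 2 * (compGraph n).edgeFinset.card = n * (n / 2 - 2) := by
    rw [SimpleGraph.two_mul_card_edgeFinset]
    rw [Finset.card_filter, Fintype.sum_prod_type, Fintype.sum_option]
    simp only [compGraph_not_adj_none_left, if_false, Finset.sum_const_zero, zero_add]
    have hinner : ∀ i : Fin n,
        (∑ v : Option (Fin n), if (compGraph n).Adj (some i) v then 1 else 0) = n / 2 - 2 := by
      intro i
      rw [Fintype.sum_option]
      simp only [compGraph_not_adj_none_right, if_false, zero_add]
      rw [← Finset.card_filter]
      simpa using inner_count' n hn hev i
    rw [Finset.sum_congr rfl (fun i _ => hinner i)]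
    simp [mul_comm]
  obtain ⟨m, rfl⟩ : ∃ m, n = 2 * m := hev
  have hm : 2 ≤ m := by omega
  have h1 : 2 * m / 2 = m := by omega
  rw [h1] at key
  have h2 : 2 * m * (m - 2) = 2 * (m * (m - 2)) := by ring
  rw [h2] at key
  have h3 : 2 * m * (2 * m - 4) = 4 * (m * (m - 2)) := by
    have : 2 * m - 4 = 2 * (m - 2) := by omega
    rw [this]; ring
  rw [h3, Nat.mul_div_cancel_left _ (by norm_num)]
  omega

/-! ### Wheel graph adjacency -/

lemma wheel_adj_some_some {n : ℕ} {i j : Fin n} :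
    (wheelGraph n).Adj (some i) (some j) ↔ (cycleGraph n).Adj i j := Iff.rfl

lemma wheel_adj_none_some {n : ℕ} (i : Fin n) : (wheelGraph n).Adj none (some i) := trivial

lemma wheel_adj_some_none {n : ℕ} (i : Fin n) : (wheelGraph n).Adj (some i) none := trivial

/-! ### Chromatic number of the wheel -/

lemma wheel_colorable (n : ℕ) (hev : 2 ∣ n) : (wheelGraph n).Colorable 3 := by
  refine ⟨SimpleGraph.Coloring.mk
    (fun v => match v with
      | none => (2 : Fin 3)
      | some i => ⟨i.val % 2, by omega⟩) ?_⟩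
  rintro (_|i) (_|j) h
  · exact h.elim
  · intro he
    have := congrArg Fin.val he
    simp only at this
    omega
  · intro he
    have := congrArg Fin.val he
    simp only at this
    omega
  · intro he
    have := congrArg Fin.val he
    simp only at this
    exact adj_parity' hev (wheel_adj_some_some.mp h) this

lemma wheel_not_colorable_two (n : ℕ) (hn : 4 ≤ n) : ¬ (wheelGraph n).Colorable 2 := by
  rintro ⟨C⟩
  have h01 : (cycleGraph n).Adj ⟨0, by omega⟩ ⟨1, by omega⟩ := adj_consec' 0 (by omega)
  have d1 := C.valid (wheel_adj_none_some ⟨0, by omega⟩)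
  have d2 := C.valid (wheel_adj_none_some ⟨1, by omega⟩)
  have d3 := C.valid (wheel_adj_some_some.mpr h01)
  have b1 := (C none).isLt
  have b2 := (C (some ⟨0, by omega⟩)).isLt
  have b3 := (C (some ⟨1, by omega⟩)).isLt
  rw [Fin.ne_iff_vne] at d1 d2 d3
  omega

lemma wheel_chrom (n : ℕ) (hn : 4 ≤ n) (hev : 2 ∣ n) :
    (wheelGraph n).chromaticNumber = 3 := by
  have hle : (wheelGraph n).chromaticNumber ≤ ((3 : ℕ) : ℕ∞) :=
    (wheel_colorable n hev).chromaticNumber_le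
  have hgt : ¬ (wheelGraph n).chromaticNumber ≤ ((2 : ℕ) : ℕ∞) := by
    rw [SimpleGraph.chromaticNumber_le_iff_colorable]
    exact wheel_not_colorable_two n hn
  have hne : (wheelGraph n).chromaticNumber ≠ ⊤ := by
    intro h
    rw [h] at hle
    exact absurd hle (by simp)
  have hk : ((ENat.toNat ((wheelGraph n).chromaticNumber) : ℕ) : ℕ∞)
      = (wheelGraph n).chromaticNumber := ENat.coe_toNat hne
  set k := ENat.toNat ((wheelGraph n).chromaticNumber) with hkdef
  rw [← hk] at hle hgt ⊢
  have h1 : k ≤ 3 := by exact_mod_cast hle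
  have h2 : ¬ k ≤ 2 := fun h => hgt (by exact_mod_cast h)
  have h3 : k = 3 := by omega
  rw [h3]
  rfl


/-! ### Structure of chromatic colorings -/

lemma chromatic_structure (n : ℕ) (hn : 4 ≤ n) (hev : 2 ∣ n)
    (c : Option (Fin n) → ℕ) (hc : IsChromaticColoring (wheelGraph n) c) :
    ∀ i j : Fin n, (c (some i) = c (some j) ↔ i.val % 2 = j.val % 2) := by
  obtain ⟨hp, hcard⟩ := hc
  rw [wheel_chrom n hn hev] at hcard
  have hcard' : (Set.range c).ncard = 3 := by exact_mod_cast hcard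
  set a := c (some ⟨0, by omega⟩) with ha_def
  set b := c (some ⟨1, by omega⟩) with hb_def
  set h := c none with hh_def
  have hab : a ≠ b := hp _ _ (wheel_adj_some_some.mpr (adj_consec' 0 (by omega)))
  have hha : h ≠ a := hp _ _ (wheel_adj_none_some _)
  have hhb : h ≠ b := hp _ _ (wheel_adj_none_some _)
  have hfin : (Set.range c).Finite := by
    by_contra hinf
    rw [Set.Infinite.ncard (fun hf => hinf hf)] at hcard'
    omega
  have hsub : ({h, a, b} : Set ℕ) ⊆ Set.range c := by
    rintro x hx
    rcases hx with rfl | rfl | rfl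
    · exact ⟨none, rfl⟩
    · exact ⟨some ⟨0, by omega⟩, rfl⟩
    · exact ⟨some ⟨1, by omega⟩, rfl⟩
  have h3 : ({h, a, b} : Set ℕ).ncard = 3 := by
    rw [Set.ncard_insert_of_notMem (by simp [hha, hhb]),
      Set.ncard_insert_of_notMem (by simp [hab]), Set.ncard_singleton]
  have hrange : Set.range c = {h, a, b} :=
    (Set.eq_of_subset_of_ncard_le hsub (by rw [hcard', h3]) hfin).symm
  have hrim : ∀ i : Fin n, c (some i) = a ∨ c (some i) = b := by
    intro i
    have hi : c (some i) ∈ Set.range c := ⟨_, rfl⟩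
    rw [hrange] at hi
    rcases hi with hi | hi | hi
    · exact absurd hi.symm (hp _ _ (wheel_adj_none_some i))
    · exact Or.inl hi
    · exact Or.inr hi
  have halt : ∀ k : ℕ, ∀ hk : k < n, c (some ⟨k, hk⟩) = if k % 2 = 0 then a else b := by
    intro k
    induction k with
    | zero => intro hk; simp [ha_def]
    | succ k ih =>
      intro hk
      have hk' : k < n := by omega
      have hne := hp _ _ (wheel_adj_some_some.mpr (adj_consec' k hk))
      have hk2 := ih hk'
      by_cases hkp : k % 2 = 0
      · have h2 : ¬ ((k+1) % 2 = 0) := by omega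
        rw [if_pos hkp] at hk2
        rw [if_neg h2]
        rcases hrim ⟨k+1, hk⟩ with h1 | h1
        · exact absurd (hk2.trans h1.symm) hne
        · exact h1
      · have h2 : (k+1) % 2 = 0 := by omega
        rw [if_neg hkp] at hk2
        rw [if_pos h2]
        rcases hrim ⟨k+1, hk⟩ with h1 | h1
        · exact h1
        · exact absurd (hk2.trans h1.symm) hne
  intro i j
  have hi := halt i.val i.isLt
  have hj := halt j.val j.isLt
  rw [Fin.eta] at hi hj
  rw [hi, hj]
  by_cases h1 : i.val % 2 = 0 <;> by_cases h2 : j.val % 2 = 0 <;>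
    simp [h1, h2, hab, Ne.symm hab] <;> omega

lemma completionEdges_eq (n : ℕ) (hn : 4 ≤ n) (hev : 2 ∣ n)
    (c : Option (Fin n) → ℕ) (hc : IsChromaticColoring (wheelGraph n) c) :
    completionEdges (wheelGraph n) c = (compGraph n).edgeSet := by
  have hpar := chromatic_structure n hn hev c hc
  ext e
  induction e using Sym2.ind with
  | _ u v =>
    simp only [completionEdges, Set.mem_setOf_eq, SimpleGraph.mem_edgeSet]
    constructor
    · rintro ⟨u', v', he, hne, hnadj, hcc⟩
      rw [show (compGraph n).Adj u v ↔ s(u, v) ∈ (compGraph n).edgeSet from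
        (SimpleGraph.mem_edgeSet _).symm, he, SimpleGraph.mem_edgeSet]
      rcases u' with _ | i <;> rcases v' with _ | j
      · exact absurd rfl hne
      · exact absurd (wheel_adj_none_some j) hnadj
      · exact absurd (wheel_adj_some_none i) hnadj
      · exact compGraph_adj_some.mpr
          ⟨fun ha => hnadj (wheel_adj_some_some.mpr ha),
           fun hpp => hcc ((hpar i j).mpr hpp)⟩
    · intro he
      rcases u with _ | i <;> rcases v with _ | j
      · exact absurd he compGraph_not_adj_none_left
      · exact absurd he compGraph_not_adj_none_left
      · exact absurd he compGraph_not_adj_none_right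
      · obtain ⟨hnadj, hpp⟩ := compGraph_adj_some.mp he
        have hcc : c (some i) ≠ c (some j) := fun hcc => hpp ((hpar i j).mp hcc)
        exact ⟨some i, some j, rfl, fun hsome => hcc (by rw [hsome]),
          fun ha => hnadj (wheel_adj_some_some.mp ha), hcc⟩

/-! ### The canonical chromatic coloring -/

def wheelColoring (n : ℕ) : Option (Fin n) → ℕ := fun v =>
  match v with
  | none => 2
  | some i => i.val % 2

lemma wheelColoring_chromatic (n : ℕ) (hn : 4 ≤ n) (hev : 2 ∣ n) :
    IsChromaticColoring (wheelGraph n) (wheelColoring n) := by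
  constructor
  · rintro (_|i) (_|j) hadj
    · exact hadj.elim
    · intro he
      have hj : j.val % 2 < 2 := by omega
      simp only [wheelColoring] at he
      omega
    · intro he
      have hi : i.val % 2 < 2 := by omega
      simp only [wheelColoring] at he
      omega
    · intro he
      simp only [wheelColoring] at he
      exact adj_parity' hev (wheel_adj_some_some.mp hadj) he
  · have hr : Set.range (wheelColoring n) = {0, 1, 2} := by
      ext x
      constructor
      · rintro ⟨v, rfl⟩
        rcases v with _ | i
        · have h2 : wheelColoring n none = 2 := rfl
          simp only [Set.mem_insert_iff, Set.mem_singleton_iff]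
          omega
        · have h2 : wheelColoring n (some i) = i.val % 2 := rfl
          simp only [Set.mem_insert_iff, Set.mem_singleton_iff]
          omega
      · rintro (rfl | rfl | rfl)
        · exact ⟨some ⟨0, by omega⟩, rfl⟩
        · exact ⟨some ⟨1, by omega⟩, rfl⟩
        · exact ⟨none, rfl⟩
    rw [hr, wheel_chrom n hn hev]
    rw [Set.ncard_insert_of_notMem (by norm_num),
      Set.ncard_insert_of_notMem (by norm_num), Set.ncard_singleton]
    rfl

/-- For every even $n ≥ 4$, $ζ(W_{1,n}) = n(n-4)/4$. -/
theorem zeta_wheel_even (n : ℕ) (hn : 4 ≤ n) (hev : Even n) :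
    zeta (wheelGraph n) = n * (n - 4) / 4 := by
  classical
  have hev2 : 2 ∣ n := hev.two_dvd
  have hncard : ∀ c : Option (Fin n) → ℕ, IsChromaticColoring (wheelGraph n) c →
      (completionEdges (wheelGraph n) c).ncard = n * (n - 4) / 4 := by
    intro c hc
    rw [completionEdges_eq n hn hev2 c hc, ← SimpleGraph.coe_edgeFinset,
      Set.ncard_coe_finset, compGraph_card n hn hev2]
  have hset : {m | ∃ c : Option (Fin n) → ℕ,
      IsChromaticColoring (wheelGraph n) c ∧ m = (completionEdges (wheelGraph n) c).ncard}
      = {n * (n - 4) / 4} := by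
    ext k
    simp only [Set.mem_setOf_eq, Set.mem_singleton_iff]
    constructor
    · rintro ⟨c, hc, rfl⟩
      exact hncard c hc
    · rintro rfl
      exact ⟨wheelColoring n, wheelColoring_chromatic n hn hev2,
        (hncard _ (wheelColoring_chromatic n hn hev2)).symm⟩
  rw [zeta, hset, csSup_singleton]
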